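/- (Potential function bound) If ‖x_t‖₂ ≤ C_b for all t < T and λ > 0, then log det(I_d + (1/λ)Σ_{t=0}^{T-1} x_t x_tᵀ) ≤ d·log(1 + T·C_b²/(d·λ)). -/

import Mathlib

open Matrix Finset

private lemma psd_vecMulVec {d : ℕ} (v : EuclideanSpace ℝ (Fin d)) :
    (vecMulVec (v : Fin d → ℝ) v).PosSemidef := by
  have h : vecMulVec (v : Fin d → ℝ) v = (replicateRow Unit (v : Fin d → ℝ))ᴴ * replicateRow Unit v := by
    rw [vecMulVec_eq Unit, conjTranspose_replicateRow, star_trivial]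
  rw [h]
  exact posSemidef_conjTranspose_mul_self _

private lemma psd_smul {d : ℕ} {A : Matrix (Fin d) (Fin d) ℝ} (hA : A.PosSemidef)
    {c : ℝ} (hc : 0 ≤ c) : (c • A).PosSemidef := by
  refine PosSemidef.of_dotProduct_mulVec_nonneg ?_ fun y => ?_
  · have := hA.isHermitian
    unfold Matrix.IsHermitian at *
    rw [conjTranspose_smul, this]
    simp
  · rw [smul_mulVec, dotProduct_smul, smul_eq_mul]
    exact mul_nonneg hc (hA.dotProduct_mulVec_nonneg y)

/-- Potential function bound: If `‖x_t‖₂ ≤ C_b` for all `t < T` and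
`λ > 0`, then `log det(I_d + (1/λ) Σ_{t<T} x_t x_tᵀ) ≤ d log(1 + T C_b²/(d λ))`. -/
theorem potential_function_bound {d T : ℕ} (hd : 0 < d) (lam Cb : ℝ) (hlam : 0 < lam)
    (x : ℕ → EuclideanSpace ℝ (Fin d))
    (hx : ∀ t < T, ‖x t‖ ≤ Cb) :
    Real.log ((1 + lam⁻¹ • ∑ t ∈ Finset.range T,
        vecMulVec (x t) (x t) : Matrix (Fin d) (Fin d) ℝ).det)
      ≤ d * Real.log (1 + T * Cb ^ 2 / (d * lam)) := by
  set A : Matrix (Fin d) (Fin d) ℝ := ∑ t ∈ Finset.range T, vecMulVec (x t) (x t) with hAdef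
  have hApsd : A.PosSemidef := by
    rw [hAdef]
    refine Finset.sum_induction _ _ (fun a b ha hb => ha.add hb) Matrix.PosSemidef.zero ?_
    exact fun t _ => psd_vecMulVec (x t)
  have hsmul : ((lam⁻¹ : ℝ) • A).PosSemidef := psd_smul hApsd (by positivity)
  set M : Matrix (Fin d) (Fin d) ℝ := 1 + lam⁻¹ • A with hMdef
  have hM : M.PosDef := Matrix.PosDef.one.add_posSemidef hsmul
  have hH : M.IsHermitian := hM.isHermitian
  set eig : Fin d → ℝ := hH.eigenvalues with heig
  have heigpos : ∀ i, 0 < eig i := hM.eigenvalues_pos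
  -- determinant is product of eigenvalues
  have hdet : M.det = ∏ i, eig i := by
    have := hH.det_eq_prod_eigenvalues
    simpa using this
  -- trace is sum of eigenvalues
  have htr : M.trace = ∑ i, eig i := by
    have := hH.trace_eq_sum_eigenvalues
    simpa using this
  -- compute the trace bound
  have hnormsq : ∀ t, (vecMulVec ((x t : Fin d → ℝ)) (x t)).trace = ‖x t‖ ^ 2 := by
    intro t
    have h1 : (vecMulVec ((x t : Fin d → ℝ)) (x t)).trace = ∑ i, (x t i) ^ 2 := by
      simp [Matrix.trace, Matrix.diag, vecMulVec_apply, sq]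
    rw [h1, EuclideanSpace.norm_eq, Real.sq_sqrt (by positivity)]
    simp [sq]
  have htrA : A.trace = ∑ t ∈ Finset.range T, ‖x t‖ ^ 2 := by
    rw [hAdef, Matrix.trace_sum]
    exact Finset.sum_congr rfl fun t _ => hnormsq t
  have htrA_nonneg : 0 ≤ A.trace := by
    rw [htrA]; positivity
  have htrA_le : A.trace ≤ T * Cb ^ 2 := by
    rw [htrA]
    calc ∑ t ∈ Finset.range T, ‖x t‖ ^ 2 ≤ ∑ t ∈ Finset.range T, Cb ^ 2 := by
          refine Finset.sum_le_sum fun t ht => ?_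
          have h := hx t (Finset.mem_range.mp ht)
          exact pow_le_pow_left₀ (norm_nonneg _) h 2
      _ = T * Cb ^ 2 := by rw [Finset.sum_const, Finset.card_range]; ring
  have htrM : M.trace = d + lam⁻¹ * A.trace := by
    rw [hMdef, Matrix.trace_add, Matrix.trace_one, Matrix.trace_smul]
    simp [smul_eq_mul]
  have hdpos : (0:ℝ) < d := by exact_mod_cast hd
  have hRHSpos : (0:ℝ) < 1 + T * Cb ^ 2 / (d * lam) := by positivity
  have htrM_le : M.trace / d ≤ 1 + T * Cb ^ 2 / (d * lam) := by
    rw [htrM]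
    rw [div_le_iff₀ hdpos]
    have : (1 + ↑T * Cb ^ 2 / (↑d * lam)) * ↑d = d + T * Cb ^ 2 / lam := by
      field_simp
    rw [this]
    have : lam⁻¹ * A.trace ≤ T * Cb ^ 2 / lam := by
      rw [div_eq_inv_mul]
      exact mul_le_mul_of_nonneg_left htrA_le (by positivity)
    linarith
  -- AM-GM on eigenvalues
  have hamgm : M.det ^ ((d:ℝ)⁻¹) ≤ M.trace / d := by
    rw [hdet, htr]
    have h := Real.geom_mean_le_arith_mean_weighted Finset.univ (fun _ => (d:ℝ)⁻¹) eig
      (fun i _ => by positivity)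
      (by simp [Finset.card_univ]; field_simp)
      (fun i _ => (heigpos i).le)
    calc (∏ i, eig i) ^ ((d:ℝ)⁻¹) = ∏ i, eig i ^ ((d:ℝ)⁻¹) := by
          rw [← Real.finset_prod_rpow _ _ (fun i _ => (heigpos i).le)]
      _ ≤ ∑ i, (d:ℝ)⁻¹ * eig i := h
      _ = (∑ i, eig i) / d := by rw [← Finset.mul_sum]; ring
  have hdetpos : 0 < M.det := hM.det_pos
  have hrpos : (0:ℝ) < M.det ^ ((d:ℝ)⁻¹) := Real.rpow_pos_of_pos hdetpos _
  have hlog1 : Real.log (M.det ^ ((d:ℝ)⁻¹)) ≤ Real.log (1 + T * Cb ^ 2 / (d * lam)) :=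
    Real.log_le_log hrpos (hamgm.trans htrM_le)
  rw [Real.log_rpow hdetpos] at hlog1
  calc Real.log M.det = d * ((d:ℝ)⁻¹ * Real.log M.det) := by
        field_simp
    _ ≤ d * Real.log (1 + T * Cb ^ 2 / (d * lam)) :=
        mul_le_mul_of_nonneg_left hlog1 (by positivity)
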